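/- Let 0 < α < 1 and let v : (0,1] → ℝ be continuously differentiable on (0,1] with ‖v‖²_{H¹_α} := ∫₀¹ v(x)² dx + ∫₀¹ x^α v'(x)² dx < ∞. Then for every x ∈ (0,1], |v(x)| ≤ (1/√(1−α) + √2) · ‖v‖_{H¹_α}; consequently v extends to a continuous function on [0,1] and the space H¹_α(0,1) embeds continuously into C([0,1]). -/

import Mathlib

open MeasureTheory Set
open scoped ENNReal

namespace Stmt1Aux

variable {α : ℝ} {v v' : ℝ → ℝ}

lemma contv (hderiv : ∀ x ∈ Ioc (0:ℝ) 1, HasDerivWithinAt v (v' x) (Ioc (0:ℝ) 1) x) :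
    ContinuousOn v (Ioc (0:ℝ) 1) := fun t ht => (hderiv t ht).continuousWithinAt

lemma ftc (hderiv : ∀ x ∈ Ioc (0:ℝ) 1, HasDerivWithinAt v (v' x) (Ioc (0:ℝ) 1) x)
    (hcont : ContinuousOn v' (Ioc (0:ℝ) 1))
    {y x : ℝ} (hy : 0 < y) (hyx : y ≤ x) (hx : x ≤ 1) :
    ∫ t in y..x, v' t = v x - v y := by
  have hsub : Icc y x ⊆ Ioc (0:ℝ) 1 := fun t ht => ⟨lt_of_lt_of_le hy ht.1, le_trans ht.2 hx⟩
  apply intervalIntegral.integral_eq_sub_of_hasDeriv_right_of_le hyx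
  · exact (contv hderiv).mono hsub
  · intro t ht
    have htm : t ∈ Ioc (0:ℝ) 1 := ⟨hy.trans ht.1, (ht.2.le.trans hx)⟩
    have hD : HasDerivAt v (v' t) t :=
      (hderiv t htm).hasDerivAt (Ioc_mem_nhds (hy.trans ht.1) (lt_of_lt_of_le ht.2 hx))
    exact hD.hasDerivWithinAt
  · exact (hcont.mono ((Set.uIcc_of_le hyx).symm ▸ hsub)).intervalIntegrable

lemma cs (hα0 : 0 < α) (hα1 : α < 1)
    (hcont : ContinuousOn v' (Ioc (0:ℝ) 1))
    {y x : ℝ} (hy : 0 < y) (hyx : y ≤ x) (hx : x ≤ 1) :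
    ∫ t in Ioc y x, |v' t| ≤
      Real.sqrt (∫ t in Ioc y x, t ^ (-α)) *
        Real.sqrt (∫ t in Ioc y x, t ^ α * v' t ^ 2) := by
  have hsub : Icc y x ⊆ Ioc (0:ℝ) 1 := fun t ht => ⟨lt_of_lt_of_le hy ht.1, le_trans ht.2 hx⟩
  set μ : Measure ℝ := volume.restrict (Ioc y x) with hμ
  set f : ℝ → ℝ := fun t => t ^ (-(α/2)) with hf
  set g : ℝ → ℝ := fun t => t ^ (α/2) * |v' t| with hg
  have hpq : Real.HolderConjugate 2 2 := Real.HolderConjugate.two_two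
  have hposIcc : ∀ t ∈ Icc y x, (0:ℝ) < t := fun t ht => lt_of_lt_of_le hy ht.1
  have hcf : ContinuousOn f (Icc y x) := fun t ht =>
    (Real.continuousAt_rpow_const t _ (Or.inl (hposIcc t ht).ne')).continuousWithinAt
  have hcg : ContinuousOn g (Icc y x) := by
    apply ContinuousOn.mul
    · exact fun t ht =>
        (Real.continuousAt_rpow_const t _ (Or.inl (hposIcc t ht).ne')).continuousWithinAt
    · exact (hcont.mono hsub).abs
  have hm : ∀ h : ℝ → ℝ, ContinuousOn h (Icc y x) → MemLp h (ENNReal.ofReal 2) μ := by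
    intro h hc
    have h2 : (ENNReal.ofReal 2) = (2 : ℝ≥0∞) := by simp
    rw [h2]
    have hmeas : AEStronglyMeasurable h μ :=
      ((hc.mono Ioc_subset_Icc_self).aestronglyMeasurable measurableSet_Ioc)
    rw [memLp_two_iff_integrable_sq hmeas]
    exact ((hc.pow 2).integrableOn_Icc).mono_set Ioc_subset_Icc_self
  have key := integral_mul_le_Lp_mul_Lq_of_nonneg (μ := μ) hpq
    (Filter.eventually_of_mem (self_mem_ae_restrict measurableSet_Ioc)
      (fun t ht => Real.rpow_nonneg (hposIcc t (Ioc_subset_Icc_self ht)).le _))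
    (Filter.eventually_of_mem (self_mem_ae_restrict measurableSet_Ioc)
      (fun t ht => mul_nonneg (Real.rpow_nonneg (hposIcc t (Ioc_subset_Icc_self ht)).le _)
        (abs_nonneg _)))
    (hm f hcf) (hm g hcg)
  have e1 : ∫ t, f t * g t ∂μ = ∫ t in Ioc y x, |v' t| := by
    rw [hμ]
    apply setIntegral_congr_fun measurableSet_Ioc
    intro t ht
    have htp := hposIcc t (Ioc_subset_Icc_self ht)
    simp only [hf, hg, ← mul_assoc, ← Real.rpow_add htp]
    norm_num
  have e2 : ∫ t, f t ^ (2:ℝ) ∂μ = ∫ t in Ioc y x, t ^ (-α) := by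
    rw [hμ]
    apply setIntegral_congr_fun measurableSet_Ioc
    intro t ht
    have htp := hposIcc t (Ioc_subset_Icc_self ht)
    show (t ^ (-(α/2)) : ℝ) ^ (2:ℝ) = t ^ (-α)
    rw [← Real.rpow_mul htp.le]
    norm_num
  have e3 : ∫ t, g t ^ (2:ℝ) ∂μ = ∫ t in Ioc y x, t ^ α * v' t ^ 2 := by
    rw [hμ]
    apply setIntegral_congr_fun measurableSet_Ioc
    intro t ht
    have htp := hposIcc t (Ioc_subset_Icc_self ht)
    show (t ^ (α/2) * |v' t| : ℝ) ^ (2:ℝ) = t ^ α * v' t ^ 2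
    rw [Real.mul_rpow (Real.rpow_nonneg htp.le _) (abs_nonneg _),
      ← Real.rpow_mul htp.le,
      show (2:ℝ) = ((2:ℕ):ℝ) by norm_num, Real.rpow_natCast, sq_abs]
    norm_num
  rw [e1, e2, e3] at key
  calc ∫ t in Ioc y x, |v' t| ≤
      (∫ t in Ioc y x, t ^ (-α)) ^ (1/(2:ℝ)) *
        (∫ t in Ioc y x, t ^ α * v' t ^ 2) ^ (1/(2:ℝ)) := key
    _ = _ := by rw [← Real.sqrt_eq_rpow, ← Real.sqrt_eq_rpow]

lemma rpow_int_eq (hα1 : α < 1) {y x : ℝ} (hy : 0 < y) (hyx : y ≤ x) :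
    ∫ t in Ioc y x, t ^ (-α) = (x ^ (1-α) - y ^ (1-α)) / (1-α) := by
  rw [← intervalIntegral.integral_of_le hyx,
    integral_rpow (Or.inl (by linarith : (-1:ℝ) < -α)),
    show (-α + 1 : ℝ) = 1 - α by ring]

lemma rpow_int_le_one (hα0 : 0 < α) (hα1 : α < 1) {y x : ℝ}
    (hy : 0 < y) (hyx : y ≤ x) (hx : x ≤ 1) :
    ∫ t in Ioc y x, t ^ (-α) ≤ 1 / (1-α) := by
  rw [rpow_int_eq hα1 hy hyx]
  have h1 : x ^ (1-α) ≤ 1 := Real.rpow_le_one (by linarith [hy.trans_le hyx]) hx (by linarith)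
  have h2 : (0:ℝ) ≤ y ^ (1-α) := Real.rpow_nonneg hy.le _
  have h3 : (0:ℝ) < 1 - α := by linarith
  rw [div_le_div_iff_of_pos_right h3]
  nlinarith

lemma diff_bound (hα0 : 0 < α) (hα1 : α < 1)
    (hderiv : ∀ x ∈ Ioc (0:ℝ) 1, HasDerivWithinAt v (v' x) (Ioc (0:ℝ) 1) x)
    (hcont : ContinuousOn v' (Ioc (0:ℝ) 1))
    (hint2 : IntegrableOn (fun x => x ^ α * (v' x) ^ 2) (Ioc (0:ℝ) 1))
    {y x : ℝ} (hy : 0 < y) (hyx : y ≤ x) (hx : x ≤ 1) :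
    |v x - v y| ≤ Real.sqrt (∫ t in Ioc y x, t ^ (-α)) *
      Real.sqrt (∫ t in Ioc (0:ℝ) 1, t ^ α * v' t ^ 2) := by
  rw [← ftc hderiv hcont hy hyx hx]
  calc |∫ t in y..x, v' t| ≤ ∫ t in y..x, |v' t| :=
        intervalIntegral.abs_integral_le_integral_abs hyx
    _ = ∫ t in Ioc y x, |v' t| := intervalIntegral.integral_of_le hyx
    _ ≤ Real.sqrt (∫ t in Ioc y x, t ^ (-α)) *
        Real.sqrt (∫ t in Ioc y x, t ^ α * v' t ^ 2) := cs hα0 hα1 hcont hy hyx hx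
    _ ≤ _ := by
        apply mul_le_mul_of_nonneg_left _ (Real.sqrt_nonneg _)
        apply Real.sqrt_le_sqrt
        apply setIntegral_mono_set hint2
        · exact Filter.eventually_of_mem (self_mem_ae_restrict measurableSet_Ioc)
            (fun t ht => mul_nonneg (Real.rpow_nonneg ht.1.le _) (sq_nonneg _))
        · exact HasSubset.Subset.eventuallyLE
            (fun t ht => ⟨hy.trans ht.1, ht.2.trans hx⟩)

end Stmt1Aux

open Stmt1Aux

/-- For `0 < α < 1` and `v` continuously differentiable on `(0,1]` with
finite weighted Sobolev norm `‖v‖²_{H¹_α} = ∫₀¹ v² + ∫₀¹ xᵅ v'²`, one has the pointwise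
bound `|v(x)| ≤ (1/√(1-α) + √2) ‖v‖_{H¹_α}` on `(0,1]`; consequently `v` extends to a
continuous function on `[0,1]` satisfying the same bound (continuous embedding
`H¹_α(0,1) ↪ C([0,1])`). -/
theorem stmt1 (α : ℝ) (hα0 : 0 < α) (hα1 : α < 1)
    (v v' : ℝ → ℝ)
    (hderiv : ∀ x ∈ Ioc (0:ℝ) 1, HasDerivWithinAt v (v' x) (Ioc (0:ℝ) 1) x)
    (hcont : ContinuousOn v' (Ioc (0:ℝ) 1))
    (hint1 : IntegrableOn (fun x => (v x) ^ 2) (Ioc (0:ℝ) 1))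
    (hint2 : IntegrableOn (fun x => x ^ α * (v' x) ^ 2) (Ioc (0:ℝ) 1)) :
    (∀ x ∈ Ioc (0:ℝ) 1,
      |v x| ≤ (1 / Real.sqrt (1 - α) + Real.sqrt 2) *
        Real.sqrt ((∫ x in Ioc (0:ℝ) 1, (v x) ^ 2)
          + ∫ x in Ioc (0:ℝ) 1, x ^ α * (v' x) ^ 2)) ∧
    ∃ w : ℝ → ℝ, ContinuousOn w (Icc (0:ℝ) 1) ∧
      (∀ x ∈ Ioc (0:ℝ) 1, w x = v x) ∧
      ∀ x ∈ Icc (0:ℝ) 1,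
        |w x| ≤ (1 / Real.sqrt (1 - α) + Real.sqrt 2) *
          Real.sqrt ((∫ x in Ioc (0:ℝ) 1, (v x) ^ 2)
            + ∫ x in Ioc (0:ℝ) 1, x ^ α * (v' x) ^ 2) := by
  have h1α : (0:ℝ) < 1 - α := by linarith
  set I1 : ℝ := ∫ x in Ioc (0:ℝ) 1, (v x) ^ 2 with hI1
  set I2 : ℝ := ∫ x in Ioc (0:ℝ) 1, x ^ α * (v' x) ^ 2 with hI2
  set S : ℝ := Real.sqrt (I1 + I2) with hS
  set C : ℝ := 1 / Real.sqrt (1 - α) + Real.sqrt 2 with hC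
  have hI1n : 0 ≤ I1 := setIntegral_nonneg measurableSet_Ioc (fun t _ => sq_nonneg _)
  have hI2n : 0 ≤ I2 := setIntegral_nonneg measurableSet_Ioc
    (fun t ht => mul_nonneg (Real.rpow_nonneg ht.1.le _) (sq_nonneg _))
  have hSI1 : Real.sqrt I1 ≤ S := Real.sqrt_le_sqrt (by linarith)
  have hSI2 : Real.sqrt I2 ≤ S := Real.sqrt_le_sqrt (by linarith)
  have hdb : ∀ y x : ℝ, 0 < y → y ≤ x → x ≤ 1 →
      |v x - v y| ≤ Real.sqrt (∫ t in Ioc y x, t ^ (-α)) * Real.sqrt I2 :=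
    fun y x hy hyx hx => diff_bound hα0 hα1 hderiv hcont hint2 hy hyx hx
  have hdb1 : ∀ y x : ℝ, 0 < y → y ≤ x → x ≤ 1 →
      |v x - v y| ≤ (1 / Real.sqrt (1 - α)) * Real.sqrt I2 := by
    intro y x hy hyx hx
    refine (hdb y x hy hyx hx).trans (mul_le_mul_of_nonneg_right ?_ (Real.sqrt_nonneg _))
    rw [one_div, ← Real.sqrt_inv, ← one_div]
    exact Real.sqrt_le_sqrt (rpow_int_le_one hα0 hα1 hy hyx hx)
  -- pointwise bound
  have hpt : ∀ x ∈ Ioc (0:ℝ) 1, |v x| ≤ C * S := by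
    obtain ⟨y, hy, hyavg⟩ := exists_le_setAverage (μ := volume) (s := Ioc (0:ℝ) 1)
      (by simp) (by simp) hint1
    have havg : ⨍ a in Ioc (0:ℝ) 1, (v a) ^ 2 ∂volume = I1 := by
      rw [setAverage_eq, Real.volume_real_Ioc]
      norm_num
      rfl
    rw [havg] at hyavg
    have hvy : |v y| ≤ Real.sqrt I1 := by
      rw [← Real.sqrt_sq_eq_abs]
      exact Real.sqrt_le_sqrt hyavg
    intro x hx
    have hdiff : |v x - v y| ≤ (1 / Real.sqrt (1 - α)) * Real.sqrt I2 := by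
      rcases le_total y x with h | h
      · exact hdb1 y x hy.1 h hx.2
      · rw [abs_sub_comm]; exact hdb1 x y hx.1 h hy.2
    have h2 : (1:ℝ) ≤ Real.sqrt 2 := by
      rw [show (1:ℝ) = Real.sqrt 1 by simp]
      exact Real.sqrt_le_sqrt (by norm_num)
    have hinv : 0 ≤ 1 / Real.sqrt (1 - α) := by positivity
    calc |v x| ≤ |v y| + |v x - v y| := by
          have := abs_sub_abs_le_abs_sub (v x) (v y); linarith
      _ ≤ Real.sqrt I1 + (1 / Real.sqrt (1 - α)) * Real.sqrt I2 := add_le_add hvy hdiff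
      _ ≤ Real.sqrt 2 * S + (1 / Real.sqrt (1 - α)) * S := by
          have := mul_le_mul_of_nonneg_left hSI2 hinv
          nlinarith [Real.sqrt_nonneg (I1 + I2)]
      _ = C * S := by rw [hC]; ring
  refine ⟨hpt, ?_⟩
  -- modulus of continuity near 0
  have hmod : ∀ δ : ℝ, 0 < δ → δ ≤ 1 → ∀ a b : ℝ, a ∈ Ioc (0:ℝ) δ → b ∈ Ioc (0:ℝ) δ →
      |v b - v a| ≤ Real.sqrt (δ ^ (1-α) / (1-α)) * Real.sqrt I2 := by
    have key : ∀ δ : ℝ, 0 < δ → δ ≤ 1 → ∀ a b : ℝ, a ∈ Ioc (0:ℝ) δ → b ∈ Ioc (0:ℝ) δ →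
        a ≤ b → |v b - v a| ≤ Real.sqrt (δ ^ (1-α) / (1-α)) * Real.sqrt I2 := by
      intro δ hδ hδ1 a b ha hb hab
      refine (hdb a b ha.1 hab (hb.2.trans hδ1)).trans
        (mul_le_mul_of_nonneg_right (Real.sqrt_le_sqrt ?_) (Real.sqrt_nonneg _))
      rw [rpow_int_eq hα1 ha.1 hab, div_le_div_iff_of_pos_right h1α]
      have h3 : b ^ (1-α) ≤ δ ^ (1-α) := Real.rpow_le_rpow (ha.1.trans_le hab).le hb.2 h1α.le
      have h4 : (0:ℝ) ≤ a ^ (1-α) := Real.rpow_nonneg ha.1.le _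
      nlinarith
    intro δ hδ hδ1 a b ha hb
    rcases le_total a b with h | h
    · exact key δ hδ hδ1 a b ha hb h
    · rw [abs_sub_comm]; exact key δ hδ hδ1 b a hb ha h
  -- the modulus tends to 0
  have hg0 : Filter.Tendsto (fun δ : ℝ => Real.sqrt (δ ^ (1-α) / (1-α)) * Real.sqrt I2)
      (nhdsWithin 0 (Ioi 0)) (nhds 0) := by
    have hca : ContinuousAt (fun δ : ℝ => Real.sqrt (δ ^ (1-α) / (1-α)) * Real.sqrt I2) 0 := by
      have h1 : ContinuousAt (fun δ : ℝ => δ ^ (1-α)) 0 :=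
        Real.continuousAt_rpow_const 0 _ (Or.inr h1α.le)
      exact (Real.continuous_sqrt.continuousAt.comp (h1.div_const _)).mul continuousAt_const
    have h0 : Real.sqrt ((0:ℝ) ^ (1-α) / (1-α)) * Real.sqrt I2 = 0 := by
      rw [Real.zero_rpow h1α.ne', zero_div, Real.sqrt_zero, zero_mul]
    have h := hca.tendsto
    rw [h0] at h
    exact h.mono_left nhdsWithin_le_nhds
  -- Cauchy at 0⁺
  have hcauchy : Cauchy (Filter.map v (nhdsWithin 0 (Ioi (0:ℝ)))) := by
    rw [Metric.cauchy_iff]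
    refine ⟨Filter.map_neBot, fun ε hε => ?_⟩
    obtain ⟨δ, hδmem, hδ1, hδlt⟩ : ∃ δ : ℝ, δ ∈ Ioi (0:ℝ) ∧ δ ≤ 1 ∧
        Real.sqrt (δ ^ (1-α) / (1-α)) * Real.sqrt I2 < ε := by
      have h1 : ∀ᶠ δ in nhdsWithin 0 (Ioi (0:ℝ)),
          Real.sqrt (δ ^ (1-α) / (1-α)) * Real.sqrt I2 < ε :=
        hg0.eventually (eventually_lt_nhds hε)
      have h2 : ∀ᶠ δ : ℝ in nhdsWithin 0 (Ioi (0:ℝ)), δ ≤ 1 :=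
        Filter.eventually_of_mem (Ioc_mem_nhdsGT one_pos) (fun t ht => ht.2)
      have h3 : ∀ᶠ δ : ℝ in nhdsWithin 0 (Ioi (0:ℝ)), δ ∈ Ioi (0:ℝ) :=
        Filter.eventually_of_mem self_mem_nhdsWithin (fun t ht => ht)
      obtain ⟨δ, hh⟩ := ((h3.and h2).and h1).exists
      exact ⟨δ, hh.1.1, hh.1.2, hh.2⟩
    refine ⟨v '' Ioc 0 δ, Filter.image_mem_map (Ioc_mem_nhdsGT hδmem), ?_⟩
    rintro _ ⟨a, ha, rfl⟩ _ ⟨b, hb, rfl⟩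
    rw [Real.dist_eq]
    exact lt_of_le_of_lt (hmod δ hδmem hδ1 b a hb ha) hδlt
  obtain ⟨L, hL⟩ := CompleteSpace.complete hcauchy
  have hvL : Filter.Tendsto v (nhdsWithin 0 (Ioi (0:ℝ))) (nhds L) := hL
  set w : ℝ → ℝ := fun t => if t ≤ 0 then L else v t with hw
  have hweq : ∀ z : ℝ, 0 < z → w z = v z := fun z hz => if_neg (not_le.mpr hz)
  have hw0 : w 0 = L := if_pos le_rfl
  have hIccdiff : Icc (0:ℝ) 1 \ {0} = Ioc 0 1 := by
    ext z
    simp only [mem_diff, mem_Icc, mem_Ioc, mem_singleton_iff]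
    constructor
    · rintro ⟨⟨h1, h2⟩, h3⟩; exact ⟨h1.lt_of_ne (Ne.symm h3), h2⟩
    · rintro ⟨h1, h2⟩; exact ⟨⟨h1.le, h2⟩, h1.ne'⟩
  refine ⟨w, ?_, fun z hz => hweq z hz.1, ?_⟩
  · -- continuity
    intro t ht
    rcases eq_or_lt_of_le ht.1 with h0 | h0
    · -- t = 0
      rw [← h0, ← continuousWithinAt_diff_self, hIccdiff]
      have hTend : Filter.Tendsto w (nhdsWithin 0 (Ioc (0:ℝ) 1)) (nhds L) := by
        apply Filter.Tendsto.congr' _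
          (hvL.mono_left (nhdsWithin_mono 0 Ioc_subset_Ioi_self))
        exact Filter.eventually_of_mem self_mem_nhdsWithin
          (fun z hz => (hweq z hz.1).symm)
      show Filter.Tendsto w (nhdsWithin 0 (Ioc (0:ℝ) 1)) (nhds (w 0))
      rw [hw0]; exact hTend
    · -- t > 0
      have hmem : Ioc (0:ℝ) 1 ∈ nhdsWithin t (Icc (0:ℝ) 1) :=
        mem_nhdsWithin.mpr ⟨Ioi 0, isOpen_Ioi, h0, fun z hz => ⟨hz.1, hz.2.2⟩⟩
      have hv : ContinuousWithinAt v (Icc (0:ℝ) 1) t :=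
        ((hderiv t ⟨h0, ht.2⟩).continuousWithinAt).mono_of_mem_nhdsWithin hmem
      refine hv.congr_of_eventuallyEq ?_ (hweq t h0)
      exact Filter.eventually_of_mem hmem (fun z hz => hweq z hz.1)
  · -- bound on Icc
    intro t ht
    rcases eq_or_lt_of_le ht.1 with h0 | h0
    · rw [← h0, hw0]
      have habs : Filter.Tendsto (fun z => |v z|) (nhdsWithin 0 (Ioi (0:ℝ))) (nhds |L|) :=
        hvL.abs
      apply le_of_tendsto habs
      filter_upwards [Ioc_mem_nhdsGT one_pos] with z hz using hpt z hz
    · rw [hweq t h0]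
      exact hpt t ⟨h0, ht.2⟩
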